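/- Let g : ℝ → ℝ be C² with g'' · sgn(g) ≥ 0 on ℝ (g'' ≥ 0 where g > 0 and g'' ≤ 0 where g < 0). Then the zero set {r ∈ ℝ : g(r) = 0}, if nonempty and if g changes sign (takes both positive and negative values), is a closed interval [α₁, α₂]; moreover g is convex on each connected component of {g > 0} and concave on each connected component of {g < 0}. -/

import Mathlib

open Set

lemma cvx_pos (g : ℝ → ℝ) (hg : ContDiff ℝ 2 g)
    (hsgn : ∀ r : ℝ, 0 < g r → 0 ≤ deriv (deriv g) r) :
    ∀ s : Set ℝ, Convex ℝ s → (∀ x ∈ s, 0 < g x) → ConvexOn ℝ s g := by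
  intro s hs hpos
  have h2 : ContDiff ℝ ((1:ℕ∞)+1) g := by exact_mod_cast hg
  have hd1 : Differentiable ℝ g := (contDiff_succ_iff_deriv.mp h2).1
  have hd2 : Differentiable ℝ (deriv g) :=
    (contDiff_succ_iff_deriv.mp h2).2.2.differentiable (by simp)
  refine convexOn_of_deriv2_nonneg hs hd1.continuous.continuousOn
    hd1.differentiableOn hd2.differentiableOn ?_
  intro x hx
  have : deriv^[2] g x = deriv (deriv g) x := by
    simp [Function.iterate_succ, Function.iterate_one]
  rw [this]
  exact hsgn x (hpos x (interior_subset hx))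

lemma ccv_neg (g : ℝ → ℝ) (hg : ContDiff ℝ 2 g)
    (hsgn : ∀ r : ℝ, g r < 0 → deriv (deriv g) r ≤ 0) :
    ∀ s : Set ℝ, Convex ℝ s → (∀ x ∈ s, g x < 0) → ConcaveOn ℝ s g := by
  intro s hs hneg
  have h2 : ContDiff ℝ ((1:ℕ∞)+1) g := by exact_mod_cast hg
  have hd1 : Differentiable ℝ g := (contDiff_succ_iff_deriv.mp h2).1
  have hd2 : Differentiable ℝ (deriv g) :=
    (contDiff_succ_iff_deriv.mp h2).2.2.differentiable (by simp)
  refine concaveOn_of_deriv2_nonpos hs hd1.continuous.continuousOn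
    hd1.differentiableOn hd2.differentiableOn ?_
  intro x hx
  have : deriv^[2] g x = deriv (deriv g) x := by
    simp [Function.iterate_succ, Function.iterate_one]
  rw [this]
  exact hsgn x (hneg x (interior_subset hx))

lemma no_pos_between (g : ℝ → ℝ) (hg : ContDiff ℝ 2 g)
    (hsgn : ∀ r : ℝ, 0 < g r → 0 ≤ deriv (deriv g) r)
    {a b x : ℝ} (ha : g a = 0) (hb : g b = 0) (hx : x ∈ Icc a b) : ¬ (0 < g x) := by
  intro hpos
  have hcont : Continuous g := hg.continuous
  -- left zero
  set Zl : Set ℝ := {t | t ∈ Icc a x ∧ g t = 0} with hZl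
  have hZlc : IsClosed Zl := (isClosed_Icc.inter (isClosed_eq hcont continuous_const))
  have hZln : Zl.Nonempty := ⟨a, ⟨le_refl a, hx.1⟩, ha⟩
  have hZlb : BddAbove Zl := (bddAbove_Icc).mono (fun t ht => ht.1)
  set u := sSup Zl with hu_def
  have hu : u ∈ Zl := hZlc.csSup_mem hZln hZlb
  have hux : u < x := lt_of_le_of_ne hu.1.2 (fun h => by rw [h] at hu; exact absurd hu.2 (ne_of_gt hpos))
  -- right zero
  set Zr : Set ℝ := {t | t ∈ Icc x b ∧ g t = 0} with hZr
  have hZrc : IsClosed Zr := (isClosed_Icc.inter (isClosed_eq hcont continuous_const))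
  have hZrn : Zr.Nonempty := ⟨b, ⟨hx.2, le_refl b⟩, hb⟩
  have hZrb : BddBelow Zr := (bddBelow_Icc).mono (fun t ht => ht.1)
  set v := sInf Zr with hv_def
  have hv : v ∈ Zr := hZrc.csInf_mem hZrn hZrb
  have hxv : x < v := lt_of_le_of_ne hv.1.1 (fun h => by rw [← h] at hv; exact absurd hv.2 (ne_of_gt hpos))
  -- positivity on Ioo u v
  have hposl : ∀ t ∈ Ioc u x, 0 < g t := by
    intro t ht
    by_contra hle
    push_neg at hle
    obtain ⟨z, hz, hgz⟩ := intermediate_value_Icc ht.2 hcont.continuousOn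
      (show (0:ℝ) ∈ Icc (g t) (g x) from ⟨hle, hpos.le⟩)
    have hzZl : z ∈ Zl := ⟨⟨le_trans hu.1.1 (le_trans ht.1.le hz.1), hz.2⟩, hgz⟩
    exact absurd (le_csSup hZlb hzZl) (not_le.mpr (lt_of_lt_of_le ht.1 hz.1))
  have hposr : ∀ t ∈ Ico x v, 0 < g t := by
    intro t ht
    by_contra hle
    push_neg at hle
    obtain ⟨z, hz, hgz⟩ := intermediate_value_Icc' ht.1 hcont.continuousOn
      (show (0:ℝ) ∈ Icc (g t) (g x) from ⟨hle, hpos.le⟩)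
    have hzZr : z ∈ Zr := ⟨⟨hz.1, le_trans hz.2 (le_trans ht.2.le hv.1.2)⟩, hgz⟩
    exact absurd (csInf_le hZrb hzZr) (not_le.mpr (lt_of_le_of_lt hz.2 ht.2))
  have hposm : ∀ t ∈ Ioo u v, 0 < g t := by
    intro t ht
    rcases le_or_gt t x with h | h
    · exact hposl t ⟨ht.1, h⟩
    · exact hposr t ⟨h.le, ht.2⟩
  -- convexity on Icc u v
  have h2 : ContDiff ℝ ((1:ℕ∞)+1) g := by exact_mod_cast hg
  have hd1 : Differentiable ℝ g := (contDiff_succ_iff_deriv.mp h2).1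
  have hd2 : Differentiable ℝ (deriv g) :=
    (contDiff_succ_iff_deriv.mp h2).2.2.differentiable (by simp)
  have hcvx : ConvexOn ℝ (Icc u v) g := by
    refine convexOn_of_deriv2_nonneg (convex_Icc u v) hcont.continuousOn
      hd1.differentiableOn hd2.differentiableOn ?_
    intro t ht
    rw [interior_Icc] at ht
    have : deriv^[2] g t = deriv (deriv g) t := by
      simp [Function.iterate_succ, Function.iterate_one]
    rw [this]
    exact hsgn t (hposm t ht)
  have huv : u ≤ v := le_trans hux.le hxv.le
  have hxseg : x ∈ segment ℝ u v := by
    rw [segment_eq_Icc huv]; exact ⟨hux.le, hxv.le⟩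
  have := hcvx.le_on_segment (left_mem_Icc.mpr huv) (right_mem_Icc.mpr huv) hxseg
  rw [hu.2, hv.2] at this
  simp at this
  exact absurd this (not_le.mpr hpos)

theorem stmt_8 (g : ℝ → ℝ) (hg : ContDiff ℝ 2 g)
    (hsgn : ∀ r : ℝ, (0 < g r → 0 ≤ deriv (deriv g) r) ∧ (g r < 0 → deriv (deriv g) r ≤ 0)) :
    ((∃ r, g r = 0) → (∃ p, 0 < g p) → (∃ q, g q < 0) →
      ∃ α₁ α₂ : ℝ, α₁ ≤ α₂ ∧ {r : ℝ | g r = 0} = Set.Icc α₁ α₂) ∧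
    (∀ s : Set ℝ, Convex ℝ s → (∀ x ∈ s, 0 < g x) → ConvexOn ℝ s g) ∧
    (∀ s : Set ℝ, Convex ℝ s → (∀ x ∈ s, g x < 0) → ConcaveOn ℝ s g) := by
  have hcont : Continuous g := hg.continuous
  refine ⟨?_, cvx_pos g hg (fun r => (hsgn r).1), ccv_neg g hg (fun r => (hsgn r).2)⟩
  rintro ⟨r0, hr0⟩ ⟨p, hp⟩ ⟨q, hq⟩
  -- negation setup
  have hgneg : ContDiff ℝ 2 (fun y => -g y) := hg.neg
  have hder_neg : ∀ r, deriv (deriv (fun y => -g y)) r = - deriv (deriv g) r := by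
    intro r
    have e1 : deriv (fun y => -g y) = fun y => -deriv g y := funext fun y => deriv.neg
    rw [e1]
    exact deriv.neg
  have hsgn_neg : ∀ r : ℝ, 0 < (fun y => -g y) r → 0 ≤ deriv (deriv (fun y => -g y)) r := by
    intro r hr
    rw [hder_neg r]
    simp only [neg_nonneg]
    exact (hsgn r).2 (by simpa using hr)
  -- convexity of zero set
  set Z : Set ℝ := {r : ℝ | g r = 0} with hZdef
  have hZoc : Z.OrdConnected := by
    constructor
    intro a ha b hb x hx
    by_contra hgx
    rcases lt_or_gt_of_ne hgx with hneg | hpos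
    · exact no_pos_between (fun y => -g y) hgneg hsgn_neg (by simpa [hZdef] using ha)
        (by simpa [hZdef] using hb) hx (by simpa using hneg)
    · exact no_pos_between g hg (fun r => (hsgn r).1) ha hb hx hpos
  -- zero strictly between p and q
  have hzex : ∃ z, g z = 0 ∧ z ∈ uIcc p q := by
    rcases le_total p q with h | h
    · obtain ⟨z, hz, hgz⟩ := intermediate_value_Icc' h hcont.continuousOn
        (show (0:ℝ) ∈ Icc (g q) (g p) from ⟨hq.le, hp.le⟩)
      exact ⟨z, hgz, by rw [uIcc_of_le h]; exact hz⟩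
    · obtain ⟨z, hz, hgz⟩ := intermediate_value_Icc h hcont.continuousOn
        (show (0:ℝ) ∈ Icc (g q) (g p) from ⟨hq.le, hp.le⟩)
      exact ⟨z, hgz, by rw [uIcc_of_ge h]; exact hz⟩
  obtain ⟨z, hgz, hzuI⟩ := hzex
  -- boundedness
  have hz12 := hzuI
  rw [Set.uIcc] at hz12
  obtain ⟨hz1, hz2⟩ := hz12
  have hZsub : Z ⊆ Icc (min p q) (max p q) := by
    intro r hr
    constructor
    · by_contra hlt
      push_neg at hlt
      have : g (min p q) = 0 := hZoc.out hr hgz ⟨hlt.le, hz1⟩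
      rcases le_total p q with h | h
      · rw [min_eq_left h] at this; exact absurd this (ne_of_gt hp)
      · rw [min_eq_right h] at this; exact absurd this (ne_of_lt hq)
    · by_contra hlt
      push_neg at hlt
      have : g (max p q) = 0 := hZoc.out hgz hr ⟨hz2, hlt.le⟩
      rcases le_total p q with h | h
      · rw [max_eq_right h] at this; exact absurd this (ne_of_lt hq)
      · rw [max_eq_left h] at this; exact absurd this (ne_of_gt hp)
  have hZclosed : IsClosed Z := isClosed_eq hcont continuous_const
  have hZcpt : IsCompact Z := isCompact_Icc.of_isClosed_subset hZclosed hZsub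
  have hZconn : IsConnected Z :=
    ⟨⟨r0, hr0⟩, hZoc.isPreconnected⟩
  have hEq := eq_Icc_of_connected_compact hZconn hZcpt
  refine ⟨sInf Z, sSup Z, ?_, hEq⟩
  have : (Icc (sInf Z) (sSup Z)).Nonempty := hEq ▸ ⟨r0, hr0⟩
  exact nonempty_Icc.mp this
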